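/- Let A be a finite set of positive integers with gcd 1. If A is UM (some A-core κ_A contains all other A-cores as subpartitions), then the A-core whose beta set equals the full set P(A) of gaps of S(A) is this unique maximal A-core κ_A. -/

import Mathlib

/-- A partition: a nonincreasing list of positive integers. -/
structure IntPartition where
  parts : List ℕ
  sorted : parts.Pairwise (· ≥ ·)
  pos : ∀ x ∈ parts, 0 < x

namespace IntPartition

/-- The i-th part (0-indexed), or 0 past the end. -/
def part (lam : IntPartition) (i : ℕ) : ℕ := lam.parts.getD i 0

/-- Hook length of the cell in (0-indexed) row i and (1-indexed) column j:
    λ_i - j + #{rows k > i with λ_k ≥ j} + 1. -/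
def hook (lam : IntPartition) (i j : ℕ) : ℕ :=
  lam.part i - j + ((List.range lam.parts.length).countP
    fun k => decide (i < k ∧ j ≤ lam.part k)) + 1

/-- λ is an A-core: no hook length lies in A. -/
def IsCore (A : Finset ℕ) (lam : IntPartition) : Prop :=
  ∀ i j : ℕ, i < lam.parts.length → 1 ≤ j → j ≤ lam.part i → lam.hook i j ∉ A

/-- The beta set of λ: first-column hook lengths {λ_i + r - i} (1-indexed form). -/
def beta (lam : IntPartition) : Finset ℕ :=
  (Finset.range lam.parts.length).image fun i => lam.part i + (lam.parts.length - 1 - i)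

/-- μ is a subpartition of λ. -/
def Sub (mu lam : IntPartition) : Prop :=
  mu.parts.length ≤ lam.parts.length ∧ ∀ i : ℕ, mu.part i ≤ lam.part i

end IntPartition

/-- Membership in the numerical semigroup generated by the finite set A. -/
def SemiS (A : Finset ℕ) (n : ℕ) : Prop := ∃ f : ℕ → ℕ, n = ∑ a ∈ A, f a * a

/-- n is a gap of S(A). -/
def GapS (A : Finset ℕ) (n : ℕ) : Prop := 0 < n ∧ ¬ SemiS A n

/-- A is UM: some A-core contains every A-core as a subpartition. -/
def UM (A : Finset ℕ) : Prop :=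
  ∃ κ : IntPartition, IntPartition.IsCore A κ ∧ ∀ μ : IntPartition, IntPartition.IsCore A μ → μ.Sub κ

namespace IntPartition

/-- countP over List.range as a Finset filter card. -/
lemma countP_range_eq (r : ℕ) (p : ℕ → Prop) [DecidablePred p] :
    (List.range r).countP (fun k => decide (p k)) = ((Finset.range r).filter p).card := by
  simp [List.countP_eq_length_filter, Finset.filter, Finset.range, Finset.card,
    Multiset.range, Multiset.filter_coe]

variable (lam : IntPartition)

lemma part_pos {i : ℕ} (hi : i < lam.parts.length) : 0 < lam.part i := by
  rw [IntPartition.part, List.getD_eq_getElem _ _ hi]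
  exact lam.pos _ (List.getElem_mem hi)

lemma part_anti {i k : ℕ} (hik : i ≤ k) (hk : k < lam.parts.length) :
    lam.part k ≤ lam.part i := by
  rcases eq_or_lt_of_le hik with rfl | hik'
  · exact le_refl _
  · have hi : i < lam.parts.length := lt_trans hik' hk
    rw [IntPartition.part, IntPartition.part, List.getD_eq_getElem _ _ hi, List.getD_eq_getElem _ _ hk]
    have := lam.sorted
    rw [List.pairwise_iff_get] at this
    exact this ⟨i, hi⟩ ⟨k, hk⟩ hik'

/-- The beta-set enumeration function. -/
def bf (i : ℕ) : ℕ := lam.part i + (lam.parts.length - 1 - i)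

lemma one_le_bf {i : ℕ} (hi : i < lam.parts.length) : 1 ≤ lam.bf i := by
  have := part_pos lam hi; unfold bf; omega

lemma bf_lt {i k : ℕ} (hik : i < k) (hk : k < lam.parts.length) :
    lam.bf k < lam.bf i := by
  have h1 := part_anti lam (le_of_lt hik) hk
  unfold bf; omega

lemma mem_beta_iff {n : ℕ} : n ∈ lam.beta ↔ ∃ i < lam.parts.length, lam.bf i = n := by
  unfold IntPartition.beta
  simp only [Finset.mem_image, Finset.mem_range]
  constructor
  · rintro ⟨i, hi, h⟩; exact ⟨i, hi, h⟩
  · rintro ⟨i, hi, h⟩; exact ⟨i, hi, h⟩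

/-- The count in the hook definition, as a Finset filter card. -/
def cnt (i j : ℕ) : ℕ :=
  ((Finset.range lam.parts.length).filter (fun k => i < k ∧ j ≤ lam.part k)).card

lemma hook_eq (i j : ℕ) : lam.hook i j = lam.part i - j + lam.cnt i j + 1 := by
  rw [IntPartition.hook, cnt, countP_range_eq]

lemma cnt_one {i : ℕ} (hi : i < lam.parts.length) :
    lam.cnt i 1 = lam.parts.length - 1 - i := by
  unfold cnt
  have h : (Finset.range lam.parts.length).filter (fun k => i < k ∧ 1 ≤ lam.part k)
      = Finset.Ico (i+1) lam.parts.length := by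
    ext k
    simp only [Finset.mem_filter, Finset.mem_range, Finset.mem_Ico]
    constructor
    · rintro ⟨h1, h2, _⟩; omega
    · rintro ⟨h1, h2⟩; exact ⟨h2, by omega, part_pos lam h2⟩
  rw [h, Nat.card_Ico]; omega

lemma cnt_le {i j : ℕ} (hi : i < lam.parts.length) (hj : 1 ≤ j) :
    lam.cnt i j ≤ lam.parts.length - 1 - i := by
  rw [← cnt_one lam hi]
  exact Finset.card_le_card (Finset.monotone_filter_right _ (fun k _ hk => ⟨hk.1, by omega⟩))

lemma cnt_anti {i j j' : ℕ} (hjj : j ≤ j') : lam.cnt i j' ≤ lam.cnt i j :=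
  Finset.card_le_card (Finset.monotone_filter_right _ (fun k _ hk => ⟨hk.1, le_trans hjj hk.2⟩))

/-- Key abacus lemma: the beta set of an A-core is closed under subtracting elements of A. -/
lemma closure {A : Finset ℕ} (hA : ∀ a ∈ A, 0 < a) (hc : IntPartition.IsCore A lam)
    {i a : ℕ} (hi : i < lam.parts.length) (ha : a ∈ A) (hab : a ≤ lam.bf i) :
    ∃ k < lam.parts.length, lam.bf k = lam.bf i - a := by
  set S1 : Finset ℕ :=
    (Finset.Ico (i+1) lam.parts.length).image (fun k => lam.bf i - lam.bf k) with hS1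
  set S2 : Finset ℕ := (Finset.Icc 1 (lam.part i)).image (fun j => lam.hook i j) with hS2
  have hbfle : ∀ k ∈ Finset.Ico (i+1) lam.parts.length, lam.bf k < lam.bf i := by
    intro k hk; rw [Finset.mem_Ico] at hk; exact bf_lt lam (by omega) hk.2
  have card1 : S1.card = lam.parts.length - 1 - i := by
    have hinj : Set.InjOn (fun k => lam.bf i - lam.bf k)
        (Finset.Ico (i+1) lam.parts.length : Finset ℕ) := by
      intro k hk k' hk' heq
      have heq' : lam.bf i - lam.bf k = lam.bf i - lam.bf k' := heq
      simp only [Finset.coe_Ico, Set.mem_Ico] at hk hk'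
      have h1 : lam.bf k < lam.bf i := bf_lt lam (by omega) hk.2
      have h2 : lam.bf k' < lam.bf i := bf_lt lam (by omega) hk'.2
      by_contra hne
      rcases Nat.lt_or_ge k k' with h | h
      · have := bf_lt lam h hk'.2; omega
      · have hlt : k' < k := by omega
        have := bf_lt lam hlt hk.2; omega
    rw [hS1, Finset.card_image_of_injOn hinj, Nat.card_Ico]
    omega
  have hookanti : ∀ j ∈ Finset.Icc 1 (lam.part i), ∀ j' ∈ Finset.Icc 1 (lam.part i),
      j < j' → lam.hook i j' < lam.hook i j := by
    intro j hj j' hj' hlt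
    rw [Finset.mem_Icc] at hj hj'
    rw [hook_eq, hook_eq]
    have := cnt_anti lam (i := i) (le_of_lt hlt)
    omega
  have card2 : S2.card = lam.part i := by
    have hinj : Set.InjOn (fun j => lam.hook i j)
        (Finset.Icc 1 (lam.part i) : Finset ℕ) := by
      intro j hj j' hj' heq
      have heq' : lam.hook i j = lam.hook i j' := heq
      simp only [Finset.coe_Icc, Set.mem_Icc] at hj hj'
      by_contra hne
      rcases Nat.lt_or_ge j j' with h | h
      · have := hookanti j (Finset.mem_Icc.2 hj) j' (Finset.mem_Icc.2 hj') h; omega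
      · have hlt : j' < j := by omega
        have := hookanti j' (Finset.mem_Icc.2 hj') j (Finset.mem_Icc.2 hj) hlt; omega
    rw [hS2, Finset.card_image_of_injOn hinj, Nat.card_Icc]
    omega
  have hsubset : S1 ∪ S2 ⊆ Finset.Icc 1 (lam.bf i) := by
    intro x hx
    rw [Finset.mem_union] at hx
    rcases hx with hx | hx
    · rw [hS1, Finset.mem_image] at hx
      obtain ⟨k, hk, rfl⟩ := hx
      have h1 := hbfle k hk
      have hk' := Finset.mem_Ico.1 hk
      have := one_le_bf lam hk'.2
      rw [Finset.mem_Icc]; omega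
    · rw [hS2, Finset.mem_image] at hx
      obtain ⟨j, hj, rfl⟩ := hx
      rw [Finset.mem_Icc] at hj
      have h1 := cnt_le lam hi hj.1
      rw [Finset.mem_Icc, hook_eq]
      unfold bf; omega
  have hdisj : Disjoint S1 S2 := by
    rw [Finset.disjoint_left]
    intro x hx1 hx2
    rw [hS1, Finset.mem_image] at hx1
    rw [hS2, Finset.mem_image] at hx2
    obtain ⟨k, hk, hk2⟩ := hx1
    obtain ⟨j, hj, hj2⟩ := hx2
    rw [Finset.mem_Ico] at hk
    rw [Finset.mem_Icc] at hj
    have hpk : lam.part k ≤ lam.part i := part_anti lam (by omega) hk.2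
    have hbk : lam.bf k < lam.bf i := bf_lt lam (by omega) hk.2
    rw [hook_eq] at hj2
    have hbfi : lam.bf i = lam.part i + (lam.parts.length - 1 - i) := rfl
    have hbfk : lam.bf k = lam.part k + (lam.parts.length - 1 - k) := rfl
    rcases le_or_gt j (lam.part k) with hcase | hcase
    · have hge : k - i ≤ lam.cnt i j := by
        have hsub : Finset.Ico (i+1) (k+1) ⊆
            (Finset.range lam.parts.length).filter (fun k' => i < k' ∧ j ≤ lam.part k') := by
          intro k' hk'
          rw [Finset.mem_Ico] at hk'
          rw [Finset.mem_filter, Finset.mem_range]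
          have h1 : k' < lam.parts.length := by omega
          have h2 : lam.part k ≤ lam.part k' := part_anti lam (by omega) hk.2
          exact ⟨h1, by omega, by omega⟩
        have := Finset.card_le_card hsub
        rw [Nat.card_Ico] at this
        rw [cnt]; omega
      omega
    · have hle : lam.cnt i j ≤ k - 1 - i := by
        have hsub : (Finset.range lam.parts.length).filter (fun k' => i < k' ∧ j ≤ lam.part k')
            ⊆ Finset.Ico (i+1) k := by
          intro k' hk'
          rw [Finset.mem_filter, Finset.mem_range] at hk'
          rw [Finset.mem_Ico]
          have hk'k : k' < k := by
            by_contra hcon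
            have : lam.part k' ≤ lam.part k := part_anti lam (by omega) hk'.1
            omega
          omega
        have := Finset.card_le_card hsub
        rw [Nat.card_Ico] at this
        rw [cnt]; omega
      omega
  have hcardU : (S1 ∪ S2).card = lam.bf i := by
    rw [Finset.card_union_of_disjoint hdisj, card1, card2]
    unfold bf; omega
  have hEq : S1 ∪ S2 = Finset.Icc 1 (lam.bf i) := by
    apply Finset.eq_of_subset_of_card_le hsubset
    rw [hcardU, Nat.card_Icc]; omega
  have ha1 : 0 < a := hA a ha
  have haU : a ∈ S1 ∪ S2 := by rw [hEq, Finset.mem_Icc]; omega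
  rw [Finset.mem_union] at haU
  rcases haU with haS | haS
  · rw [hS1, Finset.mem_image] at haS
    obtain ⟨k, hk, hk2⟩ := haS
    rw [Finset.mem_Ico] at hk
    have := hbfle k (Finset.mem_Ico.2 hk)
    exact ⟨k, hk.2, by omega⟩
  · exfalso
    rw [hS2, Finset.mem_image] at haS
    obtain ⟨j, hj, hj2⟩ := haS
    rw [Finset.mem_Icc] at hj
    exact hc i j hi hj.1 hj.2 (hj2 ▸ ha)

/-- Every element of the beta set of an A-core is not in the semigroup. -/
lemma bf_not_semi {A : Finset ℕ} (hA : ∀ a ∈ A, 0 < a) (hc : IntPartition.IsCore A lam) :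
    ∀ n : ℕ, ∀ i, i < lam.parts.length → lam.bf i = n → ¬ SemiS A n := by
  intro n
  induction n using Nat.strong_induction_on with
  | _ n ih =>
    rintro i hi hbf ⟨f, hf⟩
    have hn1 : 1 ≤ n := hbf ▸ one_le_bf lam hi
    have hex : ∃ a ∈ A, f a * a ≠ 0 := by
      apply Finset.exists_ne_zero_of_sum_ne_zero
      omega
    obtain ⟨a, haA, hfa⟩ := hex
    have ha0 : 0 < a := hA a haA
    have hfa1 : 1 ≤ f a := by
      by_contra h
      have hz : f a = 0 := by omega
      simp [hz] at hfa
    have hterm : f a * a ≤ n := by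
      rw [hf]
      exact Finset.single_le_sum (f := fun a => f a * a) (fun _ _ => Nat.zero_le _) haA
    have han : a ≤ n := le_trans (Nat.le_mul_of_pos_left a hfa1) hterm
    obtain ⟨k, hk, hbk⟩ := closure lam hA hc hi haA (hbf ▸ han)
    have hbk1 := one_le_bf lam hk
    have hlt : n - a < n := by omega
    apply ih (n - a) hlt k hk (by omega)
    refine ⟨Function.update f a (f a - 1), ?_⟩
    have hsplit : n = f a * a + ∑ x ∈ A.erase a, f x * x := by
      rw [hf, ← Finset.add_sum_erase _ _ haA]
    have hsplit2 : ∑ x ∈ A, Function.update f a (f a - 1) x * x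
        = (f a - 1) * a + ∑ x ∈ A.erase a, f x * x := by
      rw [← Finset.add_sum_erase _ (fun x => Function.update f a (f a - 1) x * x) haA]
      congr 1
      · rw [Function.update_self]
      · apply Finset.sum_congr rfl
        intro x hx
        rw [Function.update_of_ne (Finset.ne_of_mem_erase hx)]
    have hterm2 : a ≤ f a * a := Nat.le_mul_of_pos_left a hfa1
    have hmul : (f a - 1) * a = f a * a - a := by rw [Nat.sub_mul, one_mul]
    rw [hsplit2, hmul]
    omega

lemma beta_card : lam.beta.card = lam.parts.length := by
  rw [IntPartition.beta, Finset.card_image_of_injOn, Finset.card_range]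
  intro i hi i' hi' heq
  simp only [Finset.coe_range, Set.mem_Iio] at hi hi'
  by_contra hne
  have heq' : lam.bf i = lam.bf i' := heq
  rcases Nat.lt_or_ge i i' with h | h
  · have := bf_lt lam h hi'; omega
  · have hlt : i' < i := by omega
    have := bf_lt lam hlt hi; omega

end IntPartition

theorem maximal_core_has_full_gap_beta_set (A : Finset ℕ) (hA : ∀ a ∈ A, 0 < a)
    (hgcd : A.gcd id = 1)
    (κ : IntPartition) (hκ : IntPartition.IsCore A κ)
    (hmax : ∀ μ : IntPartition, IntPartition.IsCore A μ → μ.Sub κ)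
    (lam : IntPartition) (hlam : IntPartition.IsCore A lam)
    (hbeta : ∀ n : ℕ, n ∈ lam.beta ↔ GapS A n) :
    lam.parts = κ.parts := by
  have hsub := hmax lam hlam
  have hκβ : κ.beta ⊆ lam.beta := by
    intro b hb
    rw [IntPartition.mem_beta_iff] at hb
    obtain ⟨i, hi, hbf⟩ := hb
    rw [hbeta]
    constructor
    · have := IntPartition.one_le_bf κ hi; omega
    · exact IntPartition.bf_not_semi κ hA hκ b i hi hbf
  have hc1 := IntPartition.beta_card κ
  have hc2 := IntPartition.beta_card lam
  have hcle := Finset.card_le_card hκβ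
  have hlen : lam.parts.length = κ.parts.length := by
    have := hsub.1; omega
  have hβeq : κ.beta = lam.beta := by
    apply Finset.eq_of_subset_of_card_le hκβ
    omega
  set r := κ.parts.length with hr
  have key : ∀ i, i < r → κ.bf i = lam.bf i := by
    rcases Nat.eq_zero_or_pos r with hr0 | hrpos
    · intro i hi; omega
    · have hFκ : ∀ x : Fin r, (fun x : Fin r => κ.bf (r - 1 - x.val)) x ∈ lam.beta := by
        intro x
        rw [← hβeq, IntPartition.mem_beta_iff]
        exact ⟨r - 1 - x.val, by omega, rfl⟩
      have hFl : ∀ x : Fin r, (fun x : Fin r => lam.bf (r - 1 - x.val)) x ∈ lam.beta := by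
        intro x
        rw [IntPartition.mem_beta_iff]
        exact ⟨r - 1 - x.val, by omega, rfl⟩
      have hmκ : StrictMono (fun x : Fin r => κ.bf (r - 1 - x.val)) := by
        intro x y hxy
        have hxy' : x.val < y.val := hxy
        have hy := y.isLt
        exact IntPartition.bf_lt κ (i := r - 1 - y.val) (k := r - 1 - x.val)
          (by omega) (by omega)
      have hml : StrictMono (fun x : Fin r => lam.bf (r - 1 - x.val)) := by
        intro x y hxy
        have hxy' : x.val < y.val := hxy
        have hy := y.isLt
        exact IntPartition.bf_lt lam (i := r - 1 - y.val) (k := r - 1 - x.val)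
          (by omega) (by omega)
      have hcard : lam.beta.card = r := by omega
      have e1 := Finset.orderEmbOfFin_unique hcard hFκ hmκ
      have e2 := Finset.orderEmbOfFin_unique hcard hFl hml
      intro i hi
      have hfin : r - 1 - i < r := by omega
      have h3 := congrFun (e1.trans e2.symm) ⟨r - 1 - i, hfin⟩
      have h4 : κ.bf (r - 1 - (r - 1 - i)) = lam.bf (r - 1 - (r - 1 - i)) := h3
      have hix : r - 1 - (r - 1 - i) = i := by omega
      rwa [hix] at h4
  apply List.ext_getElem hlen
  intro n h1 h2
  have hbfeq := key n (by omega)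
  have hpart : lam.part n = κ.part n := by
    have e1 : κ.bf n = κ.part n + (κ.parts.length - 1 - n) := rfl
    have e2 : lam.bf n = lam.part n + (lam.parts.length - 1 - n) := rfl
    omega
  rw [show lam.parts[n] = lam.part n from (List.getD_eq_getElem _ _ h1).symm,
    show κ.parts[n] = κ.part n from (List.getD_eq_getElem _ _ h2).symm, hpart]
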